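/- Let λ, c, L > 0, α ∈ ℝ with α ≠ 0, and set s = √(λ² + α²c²) and θ = |α|λ/s. Define, for y ∈ [0,L], f₁(y) = 2λ²·sinh(θ(L−y)) / ((s + |α|c)²·e^{θL} − (s − |α|c)²·e^{−θL}) and f₃(y) = ((s + |α|c)²·e^{θ(L−y)} − (s − |α|c)²·e^{−θ(L−y)}) / ((s + |α|c)²·e^{θL} − (s − |α|c)²·e^{−θL}). Then f₁′(y) = ((λ³ + 2λc²α²)/(2cs²))·f₁(y) − (λ³/(2cs²))·f₃(y) and f₃′(y) = (λ³/(2cs²))·f₁(y) − ((λ³ + 2λc²α²)/(2cs²))·f₃(y), with f₁(L) = 0 and f₃(0) = 1. -/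

import Mathlib

theorem stmt_18 (lam c L α : ℝ) (hlam : 0 < lam) (hc : 0 < c) (hL : 0 < L) (hα : α ≠ 0)
    (s θ : ℝ) (hs : s = Real.sqrt (lam ^ 2 + α ^ 2 * c ^ 2)) (hθ : θ = |α| * lam / s)
    (den : ℝ)
    (hden : den = (s + |α| * c) ^ 2 * Real.exp (θ * L) - (s - |α| * c) ^ 2 * Real.exp (-(θ * L)))
    (f1 f3 : ℝ → ℝ)
    (hf1 : f1 = fun y => 2 * lam ^ 2 * Real.sinh (θ * (L - y)) / den)
    (hf3 : f3 = fun y => ((s + |α| * c) ^ 2 * Real.exp (θ * (L - y))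
        - (s - |α| * c) ^ 2 * Real.exp (-(θ * (L - y)))) / den) :
    (∀ y ∈ Set.Icc 0 L,
      HasDerivAt f1 ((lam ^ 3 + 2 * lam * c ^ 2 * α ^ 2) / (2 * c * s ^ 2) * f1 y
        - lam ^ 3 / (2 * c * s ^ 2) * f3 y) y) ∧
    (∀ y ∈ Set.Icc 0 L,
      HasDerivAt f3 (lam ^ 3 / (2 * c * s ^ 2) * f1 y
        - (lam ^ 3 + 2 * lam * c ^ 2 * α ^ 2) / (2 * c * s ^ 2) * f3 y) y) ∧
    f1 L = 0 ∧ f3 0 = 1 := by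
  have hβpos : 0 < |α| := abs_pos.mpr hα
  have hβ2 : |α| ^ 2 = α ^ 2 := sq_abs α
  have harg : (0:ℝ) < lam ^ 2 + α ^ 2 * c ^ 2 := by positivity
  have hspos : 0 < s := by rw [hs]; exact Real.sqrt_pos.mpr harg
  have hs2 : s ^ 2 = lam ^ 2 + α ^ 2 * c ^ 2 := by rw [hs]; exact Real.sq_sqrt harg.le
  have hθs : θ * s = |α| * lam := by rw [hθ]; field_simp
  have hθpos : 0 < θ := by rw [hθ]; positivity
  have hsβc : |α| * c < s := by nlinarith [sq_abs α]
  have hApos : 0 < (s + |α| * c) ^ 2 := by positivity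
  have hBnn : 0 ≤ (s - |α| * c) ^ 2 := sq_nonneg _
  have hAB : (s - |α| * c) ^ 2 < (s + |α| * c) ^ 2 := by
    nlinarith [mul_pos (mul_pos hβpos hc) hspos]
  have hee : Real.exp (-(θ * L)) < Real.exp (θ * L) := by
    apply Real.exp_lt_exp.mpr; nlinarith
  have hdpos : 0 < den := by
    rw [hden]
    nlinarith [Real.exp_pos (θ * L), Real.exp_pos (-(θ * L))]
  have hd0 : den ≠ 0 := ne_of_gt hdpos
  have hcs : (2 * c * s ^ 2) ≠ 0 := by positivity
  have key1 : (lam ^ 3 + 2 * lam * c ^ 2 * α ^ 2) * lam ^ 2 - lam ^ 3 * (s + |α| * c) ^ 2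
      = -(θ * lam ^ 2) * (2 * c * s ^ 2) := by
    linear_combination (-(lam ^ 3)) * hs2 - lam ^ 3 * c ^ 2 * hβ2 + 2 * c * lam ^ 2 * s * hθs
  have key2 : lam ^ 3 * (s - |α| * c) ^ 2 - (lam ^ 3 + 2 * lam * c ^ 2 * α ^ 2) * lam ^ 2
      = -(θ * lam ^ 2) * (2 * c * s ^ 2) := by
    linear_combination lam ^ 3 * hs2 + lam ^ 3 * c ^ 2 * hβ2 + 2 * c * lam ^ 2 * s * hθs
  have key3 : (lam ^ 3 + 2 * lam * c ^ 2 * α ^ 2) * (s + |α| * c) ^ 2 - lam ^ 3 * lam ^ 2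
      = (θ * (s + |α| * c) ^ 2) * (2 * c * s ^ 2) := by
    linear_combination
      (lam * (-(s + |α| * c) ^ 2 + 2 * (s ^ 2 - α ^ 2 * c ^ 2)
        - (s ^ 2 - lam ^ 2 - α ^ 2 * c ^ 2))) * hs2
      + (lam * (-2 * (s ^ 2 - α ^ 2 * c ^ 2) * c ^ 2 + c ^ 4 * (|α| ^ 2 - α ^ 2)
        - (s + |α| * c) ^ 2 * c ^ 2)) * hβ2
      + (-2 * c * (s + |α| * c) ^ 2 * s) * hθs
  have key4 : lam ^ 3 * lam ^ 2 - (lam ^ 3 + 2 * lam * c ^ 2 * α ^ 2) * (s - |α| * c) ^ 2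
      = (θ * (s - |α| * c) ^ 2) * (2 * c * s ^ 2) := by
    linear_combination
      (-lam * (-(s - |α| * c) ^ 2 + 2 * (s ^ 2 - α ^ 2 * c ^ 2)
        - (s ^ 2 - lam ^ 2 - α ^ 2 * c ^ 2))) * hs2
      + (-lam * (-2 * (s ^ 2 - α ^ 2 * c ^ 2) * c ^ 2 + c ^ 4 * (|α| ^ 2 - α ^ 2)
        - (s - |α| * c) ^ 2 * c ^ 2)) * hβ2
      + (-2 * c * (s - |α| * c) ^ 2 * s) * hθs
  have hinner : ∀ y : ℝ, HasDerivAt (fun y => θ * (L - y)) (-θ) y := by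
    intro y
    simpa using (((hasDerivAt_id y).const_sub L).const_mul θ)
  refine ⟨?_, ?_, ?_, ?_⟩
  · intro y _
    have h1 : HasDerivAt (fun y => 2 * lam ^ 2 * Real.sinh (θ * (L - y)) / den)
        (2 * lam ^ 2 * (Real.cosh (θ * (L - y)) * (-θ)) / den) y :=
      (((Real.hasDerivAt_sinh _).comp y (hinner y)).const_mul (2 * lam ^ 2)).div_const den
    rw [hf1, hf3]
    convert h1 using 1
    beta_reduce
    rw [Real.cosh_eq, Real.sinh_eq, div_mul_div_comm, div_mul_div_comm, div_sub_div_same,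
      div_eq_div_iff (by positivity) hd0]
    linear_combination (den * Real.exp (θ * (L - y))) * key1
      + (den * Real.exp (-(θ * (L - y)))) * key2
  · intro y _
    have h2 : HasDerivAt (fun y => Real.exp (θ * (L - y))) (Real.exp (θ * (L - y)) * (-θ)) y :=
      (Real.hasDerivAt_exp _).comp y (hinner y)
    have h3 : HasDerivAt (fun y => Real.exp (-(θ * (L - y))))
        (Real.exp (-(θ * (L - y))) * θ) y := by
      have := (Real.hasDerivAt_exp _).comp y (hinner y).neg
      simp only [neg_neg] at this; exact this
    have h4 : HasDerivAt (fun y => ((s + |α| * c) ^ 2 * Real.exp (θ * (L - y))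
        - (s - |α| * c) ^ 2 * Real.exp (-(θ * (L - y)))) / den)
        (((s + |α| * c) ^ 2 * (Real.exp (θ * (L - y)) * (-θ))
          - (s - |α| * c) ^ 2 * (Real.exp (-(θ * (L - y))) * θ)) / den) y :=
      ((h2.const_mul _).sub (h3.const_mul _)).div_const den
    rw [hf1, hf3]
    convert h4 using 1
    beta_reduce
    rw [Real.sinh_eq, div_mul_div_comm, div_mul_div_comm, div_sub_div_same,
      div_eq_div_iff (by positivity) hd0]
    linear_combination (-(den * Real.exp (θ * (L - y)))) * key3
      - (den * Real.exp (-(θ * (L - y)))) * key4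
  · simp only [hf1, sub_self, mul_zero, Real.sinh_zero, zero_div]
  · simp only [hf3, sub_zero]
    rw [← hden]
    exact div_self hd0
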